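/- Suppose ν⁰ is a real eigenvector of B = Aᵀ with eigenvalue 0 and ν¹ satisfies Bν¹ = ν⁰, and ν² is a real eigenvector of B with real eigenvalue λ₂. Then F(x) = (ν²·x) · exp(−λ₂ · (ν¹·x)/(ν⁰·x)) is an autonomous first integral of dx/dt = Ax on any open set where ν⁰·x ≠ 0. -/

import Mathlib

open Matrix

noncomputable def dotCLM {n : ℕ} (ν : Fin n → ℝ) : (Fin n → ℝ) →L[ℝ] ℝ :=
  LinearMap.toContinuousLinearMap
    { toFun := fun y => ν ⬝ᵥ y
      map_add' := by intro a b; simp [dotProduct, mul_add, Finset.sum_add_distrib]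
      map_smul' := by
        intro c a
        simp [dotProduct, Finset.mul_sum]
        ring_nf
        exact Finset.sum_congr rfl fun i _ => by ring }

lemma dotCLM_hasFDerivAt {n : ℕ} (ν : Fin n → ℝ) (x : Fin n → ℝ) :
    HasFDerivAt (fun y => ν ⬝ᵥ y) (dotCLM ν) x :=
  (dotCLM ν).hasFDerivAt

@[simp] lemma dotCLM_apply {n : ℕ} (ν v : Fin n → ℝ) : dotCLM ν v = ν ⬝ᵥ v := rfl

/-- Theorem 1.6: suppose `Aᵀν⁰ = 0`, `Aᵀν¹ = ν⁰`, and `Aᵀν² = λ₂ν²`.  Then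
`F(x) = (ν²·x)·exp(−λ₂·(ν¹·x)/(ν⁰·x))` is an autonomous first integral of
`dx/dt = Ax` wherever `ν⁰·x ≠ 0`. -/
theorem first_integral_zero_generalized_eigenvector
    (n : ℕ) (A : Matrix (Fin n) (Fin n) ℝ)
    (ν₀ ν₁ ν₂ : Fin n → ℝ) (lam₂ : ℝ) (hν₀ : ν₀ ≠ 0) (hν₂ : ν₂ ≠ 0)
    (heig₀ : Aᵀ.mulVec ν₀ = 0)
    (hgen : Aᵀ.mulVec ν₁ = ν₀)
    (heig₂ : Aᵀ.mulVec ν₂ = lam₂ • ν₂) :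
    ∀ x : Fin n → ℝ, ν₀ ⬝ᵥ x ≠ 0 →
      fderiv ℝ (fun y => (ν₂ ⬝ᵥ y) * Real.exp (-lam₂ * ((ν₁ ⬝ᵥ y) / (ν₀ ⬝ᵥ y))))
        x (A.mulVec x) = 0 := by
  intro x hx
  have hinv : HasFDerivAt (fun y => (ν₀ ⬝ᵥ y)⁻¹)
      ((ContinuousLinearMap.smulRight (1 : ℝ →L[ℝ] ℝ) (-((ν₀ ⬝ᵥ x) ^ 2)⁻¹)).comp
        (dotCLM ν₀)) x :=
    (hasFDerivAt_inv hx).comp x (dotCLM_hasFDerivAt ν₀ x)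
  have hdiv : HasFDerivAt (fun y => (ν₁ ⬝ᵥ y) * (ν₀ ⬝ᵥ y)⁻¹)
      ((ν₁ ⬝ᵥ x) • (ContinuousLinearMap.smulRight (1 : ℝ →L[ℝ] ℝ)
          (-((ν₀ ⬝ᵥ x) ^ 2)⁻¹)).comp (dotCLM ν₀) +
        (ν₀ ⬝ᵥ x)⁻¹ • dotCLM ν₁) x :=
    (dotCLM_hasFDerivAt ν₁ x).mul hinv
  have hexp := (hdiv.const_mul (-lam₂)).exp
  have htot : HasFDerivAt (fun y => (ν₂ ⬝ᵥ y) * Real.exp (-lam₂ * ((ν₁ ⬝ᵥ y) * (ν₀ ⬝ᵥ y)⁻¹))) _ x :=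
    (dotCLM_hasFDerivAt ν₂ x).mul hexp
  have hfun : (fun y => (ν₂ ⬝ᵥ y) * Real.exp (-lam₂ * ((ν₁ ⬝ᵥ y) / (ν₀ ⬝ᵥ y)))) =
      fun y => (ν₂ ⬝ᵥ y) * Real.exp (-lam₂ * ((ν₁ ⬝ᵥ y) * (ν₀ ⬝ᵥ y)⁻¹)) := by
    simp [div_eq_mul_inv]
  rw [hfun, htot.fderiv]
  have hdot : ∀ ν : Fin n → ℝ, ν ⬝ᵥ A.mulVec x = Aᵀ.mulVec ν ⬝ᵥ x := by
    intro ν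
    rw [Matrix.dotProduct_mulVec, Matrix.mulVec_transpose]
  have h0 : ν₀ ⬝ᵥ A.mulVec x = 0 := by rw [hdot, heig₀]; simp
  have h1 : ν₁ ⬝ᵥ A.mulVec x = ν₀ ⬝ᵥ x := by rw [hdot, hgen]
  have h2 : ν₂ ⬝ᵥ A.mulVec x = lam₂ * (ν₂ ⬝ᵥ x) := by
    rw [hdot, heig₂, smul_dotProduct]; rfl
  simp only [ContinuousLinearMap.add_apply, ContinuousLinearMap.smul_apply,
    ContinuousLinearMap.comp_apply, ContinuousLinearMap.smulRight_apply,
    ContinuousLinearMap.one_apply, dotCLM_apply, h0, h1, h2, smul_eq_mul]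
  field_simp
  ring
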